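/- Let A ∈ GL(n,ℝ) and suppose the cyclic group L(A) = {A^k : k ∈ ℤ} has a limit point in GL(n,ℂ) along a convergent subsequence {A^{k_n}} with A diagonalizable. Then every eigenvalue of A has absolute value 1, and if moreover L(A) is closed in GL(n,ℝ), all eigenvalues are roots of unity and L(A) is a finite cyclic group. -/

import Mathlib

open Filter Topology

set_option maxHeartbeats 1000000

private lemma aux_toNat_tendsto : Tendsto Int.toNat atTop atTop :=
  tendsto_atTop_atTop_of_monotone (fun _ _ h => Int.toNat_le_toNat h)
    (fun b => ⟨(b : ℤ), by simp⟩)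

private lemma aux_zpow_tendsto_zero {z : ℂ} (hz : ‖z‖ < 1) {k : ℕ → ℤ}
    (hk : Tendsto k atTop atTop) :
    Tendsto (fun m => z ^ k m) atTop (𝓝 0) := by
  have h1 : Tendsto (fun m => (k m).toNat) atTop atTop := aux_toNat_tendsto.comp hk
  have h2 := (tendsto_pow_atTop_nhds_zero_of_norm_lt_one hz).comp h1
  refine h2.congr' ?_
  filter_upwards [hk.eventually_ge_atTop 0] with m hm
  simp only [Function.comp_apply]
  rw [← zpow_natCast, Int.toNat_of_nonneg hm]

private lemma aux_strictMono_int_tendsto {k : ℕ → ℤ} (hk : StrictMono k) :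
    Tendsto k atTop atTop := by
  have h : ∀ m : ℕ, k 0 + m ≤ k m := by
    intro m
    induction m with
    | zero => simp
    | succ m ih =>
      have h2 := hk (Nat.lt_succ_self m)
      rw [Nat.succ_eq_add_one] at h2
      push_cast
      omega
  refine tendsto_atTop_mono h ?_
  exact tendsto_atTop_add_const_left _ _ (tendsto_natCast_atTop_atTop)

theorem powers_with_limit_point_have_unimodular_eigenvalues
    (n : ℕ) (A : GL (Fin n) ℝ) (Ac : (Matrix (Fin n) (Fin n) ℂ)ˣ)
    (hAc : (Ac : Matrix (Fin n) (Fin n) ℂ) =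
      ((A : Matrix (Fin n) (Fin n) ℝ)).map Complex.ofReal)
    -- `A` is diagonalizable over `ℂ`
    (hdiag : ∃ (P : Matrix (Fin n) (Fin n) ℂ) (d : Fin n → ℂ), IsUnit P ∧
      (Ac : Matrix (Fin n) (Fin n) ℂ) = P * Matrix.diagonal d * P⁻¹)
    -- a convergent subsequence of powers with invertible limit
    (hconv : ∃ k : ℕ → ℤ, StrictMono k ∧ ∃ L : Matrix (Fin n) (Fin n) ℂ, IsUnit L ∧
      Tendsto (fun m => ((Ac ^ k m : (Matrix (Fin n) (Fin n) ℂ)ˣ) :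
        Matrix (Fin n) (Fin n) ℂ)) atTop (𝓝 L)) :
    (∀ μ ∈ spectrum ℂ (Ac : Matrix (Fin n) (Fin n) ℂ), ‖μ‖ = 1) ∧
    (IsClosed (Set.range fun k : ℤ =>
        ((A ^ k : GL (Fin n) ℝ) : Matrix (Fin n) (Fin n) ℝ)) →
      (∀ μ ∈ spectrum ℂ (Ac : Matrix (Fin n) (Fin n) ℂ), ∃ m : ℕ, 0 < m ∧ μ ^ m = 1) ∧
      (Set.range fun k : ℤ => A ^ k).Finite) := by
  classical
  obtain ⟨P, d, hP, hPDP⟩ := hdiag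
  obtain ⟨Pu, rfl⟩ := hP
  obtain ⟨k, hkmono, L, hL, hlim⟩ := hconv
  have hPinv : (Pu : Matrix (Fin n) (Fin n) ℂ)⁻¹ = ((Pu⁻¹ : (Matrix (Fin n) (Fin n) ℂ)ˣ) : Matrix (Fin n) (Fin n) ℂ) := (Matrix.coe_units_inv Pu).symm
  rw [hPinv] at hPDP
  -- each `d i` is nonzero
  have hdetP1 : ((Pu : Matrix (Fin n) (Fin n) ℂ)).det * ((Pu⁻¹ : (Matrix (Fin n) (Fin n) ℂ)ˣ) : Matrix (Fin n) (Fin n) ℂ).det = 1 := by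
    rw [← Matrix.det_mul, ← Units.val_mul, mul_inv_cancel, Units.val_one, Matrix.det_one]
  have hdetAc : (Ac : Matrix (Fin n) (Fin n) ℂ).det = ∏ i, d i := by
    rw [hPDP, Matrix.det_mul, Matrix.det_mul]
    calc (Pu : Matrix (Fin n) (Fin n) ℂ).det * (Matrix.diagonal d).det * ((Pu⁻¹ : (Matrix (Fin n) (Fin n) ℂ)ˣ) : Matrix (Fin n) (Fin n) ℂ).det
        = (Matrix.diagonal d).det * ((Pu : Matrix (Fin n) (Fin n) ℂ).det * ((Pu⁻¹ : (Matrix (Fin n) (Fin n) ℂ)ˣ) : Matrix (Fin n) (Fin n) ℂ).det) := by ring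
      _ = ∏ i, d i := by rw [hdetP1, mul_one, Matrix.det_diagonal]
  have hdetu : IsUnit ((Ac : Matrix (Fin n) (Fin n) ℂ).det) := (Matrix.isUnit_iff_isUnit_det _).mp Ac.isUnit
  have hd0 : ∀ i, d i ≠ 0 := by
    intro i hi
    rw [hdetAc] at hdetu
    rw [Finset.prod_eq_zero (Finset.mem_univ i) hi] at hdetu
    exact not_isUnit_zero hdetu
  -- the diagonal part as a unit
  have hDval : ∀ i, d i * (d i)⁻¹ = 1 := fun i => mul_inv_cancel₀ (hd0 i)
  set Du : (Matrix (Fin n) (Fin n) ℂ)ˣ :=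
    { val := Matrix.diagonal d
      inv := Matrix.diagonal fun i => (d i)⁻¹
      val_inv := by
        rw [Matrix.diagonal_mul_diagonal]
        rw [show (fun i => d i * (d i)⁻¹) = fun _ => (1 : ℂ) from funext hDval]
        exact Matrix.diagonal_one
      inv_val := by
        rw [Matrix.diagonal_mul_diagonal]
        rw [show (fun i => (d i)⁻¹ * d i) = fun _ => (1 : ℂ) from
          funext fun i => by rw [mul_comm]; exact hDval i]
        exact Matrix.diagonal_one } with hDu_def
  have hAcu : Ac = Pu * Du * Pu⁻¹ := by
    apply Units.ext
    rw [hPDP]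
    simp only [Units.val_mul]
    rfl
  -- coercion of integer powers of `Du`
  have hDuj : ∀ j : ℤ, ((Du ^ j : (Matrix (Fin n) (Fin n) ℂ)ˣ) : Matrix (Fin n) (Fin n) ℂ) = Matrix.diagonal (fun i => d i ^ j) := by
    intro j
    cases j with
    | ofNat m =>
      rw [Int.ofNat_eq_coe, zpow_natCast, Units.val_pow_eq_pow_val]
      show (Matrix.diagonal d) ^ m = _
      rw [Matrix.diagonal_pow]
      exact congrArg Matrix.diagonal (funext fun i => (zpow_natCast (d i) m).symm)
    | negSucc m =>
      rw [zpow_negSucc, ← inv_pow, Units.val_pow_eq_pow_val]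
      show (Matrix.diagonal fun i => (d i)⁻¹) ^ (m + 1) = _
      rw [Matrix.diagonal_pow]
      refine congrArg Matrix.diagonal (funext fun i => ?_)
      show ((d i)⁻¹) ^ (m + 1) = d i ^ Int.negSucc m
      rw [inv_pow, zpow_negSucc]
  -- integer powers of `Ac`
  have hpowu : ∀ j : ℤ, Ac ^ j = Pu * Du ^ j * Pu⁻¹ := by
    intro j
    rw [hAcu]
    have h := map_zpow (MulAut.conj Pu) Du j
    simpa [MulAut.conj_apply] using h.symm
  have hpow : ∀ j : ℤ, ((Ac ^ j : (Matrix (Fin n) (Fin n) ℂ)ˣ) : Matrix (Fin n) (Fin n) ℂ) =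
      (Pu : Matrix (Fin n) (Fin n) ℂ) * Matrix.diagonal (fun i => d i ^ j) * ((Pu⁻¹ : (Matrix (Fin n) (Fin n) ℂ)ˣ) : Matrix (Fin n) (Fin n) ℂ) := by
    intro j
    rw [hpowu j]
    simp only [Units.val_mul]
    rw [hDuj j]
  have hkT : Tendsto k atTop atTop := aux_strictMono_int_tendsto hkmono
  -- limit of the diagonal parts
  set Q : Matrix (Fin n) (Fin n) ℂ := ((Pu⁻¹ : (Matrix (Fin n) (Fin n) ℂ)ˣ) : Matrix (Fin n) (Fin n) ℂ) with hQdef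
  set L' : Matrix (Fin n) (Fin n) ℂ := Q * L * (Pu : Matrix (Fin n) (Fin n) ℂ) with hL'def
  have hQP : Q * (Pu : Matrix (Fin n) (Fin n) ℂ) = 1 := by
    rw [hQdef, ← Units.val_mul, inv_mul_cancel, Units.val_one]
  have hlim' : Tendsto (fun m => Matrix.diagonal (fun i => d i ^ k m)) atTop (𝓝 L') := by
    have hc : Continuous fun X : Matrix (Fin n) (Fin n) ℂ => Q * X * (Pu : Matrix (Fin n) (Fin n) ℂ) :=
      (continuous_const.matrix_mul continuous_id).matrix_mul continuous_const
    have h := (hc.tendsto L).comp hlim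
    refine h.congr fun m => ?_
    simp only [Function.comp_apply]
    rw [hpow (k m)]
    calc Q * ((Pu : Matrix (Fin n) (Fin n) ℂ) * Matrix.diagonal (fun i => d i ^ k m) * Q) * (Pu : Matrix (Fin n) (Fin n) ℂ)
        = (Q * (Pu : Matrix (Fin n) (Fin n) ℂ)) * Matrix.diagonal (fun i => d i ^ k m) * (Q * (Pu : Matrix (Fin n) (Fin n) ℂ)) := by
          noncomm_ring
      _ = Matrix.diagonal (fun i => d i ^ k m) := by rw [hQP, one_mul, mul_one]
  have hentry : ∀ i, Tendsto (fun m => d i ^ k m) atTop (𝓝 (L' i i)) := by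
    intro i
    have hc : Continuous fun X : Matrix (Fin n) (Fin n) ℂ => X i i :=
      (continuous_apply i).comp (continuous_apply i)
    have h := (hc.tendsto L').comp hlim'
    refine h.congr fun m => ?_
    simp only [Function.comp_apply]
    rw [Matrix.diagonal_apply_eq]
  have hdetlim : Tendsto (fun m => ∏ i, d i ^ k m) atTop (𝓝 L'.det) := by
    have hc : Continuous fun X : Matrix (Fin n) (Fin n) ℂ => X.det := Continuous.matrix_det continuous_id
    have h := (hc.tendsto L').comp hlim'
    refine h.congr fun m => ?_
    simp only [Function.comp_apply]
    rw [Matrix.det_diagonal]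
  have hdetlim2 : Tendsto (fun m => ∏ i, d i ^ k m) atTop (𝓝 (∏ i, L' i i)) := by
    exact tendsto_finset_prod _ (fun i _ => hentry i)
  have hL'unit : IsUnit L' := ((Pu⁻¹).isUnit.mul hL).mul Pu.isUnit
  have hL'det : L'.det ≠ 0 := by
    have := (Matrix.isUnit_iff_isUnit_det _).mp hL'unit
    exact IsUnit.ne_zero this
  have hprod : (∏ i, L' i i) = L'.det := tendsto_nhds_unique hdetlim2 hdetlim
  have hcne : ∀ i, L' i i ≠ 0 := by
    intro i hi
    exact hL'det (hprod ▸ Finset.prod_eq_zero (Finset.mem_univ i) hi)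
  -- key unimodularity
  have habs : ∀ i, ‖d i‖ = 1 := by
    intro i
    by_contra hne
    have hne' : ‖d i‖ ≠ 1 := by exact hne
    rcases lt_or_gt_of_ne hne' with hlt | hgt
    · have h0 := aux_zpow_tendsto_zero hlt hkT
      exact hcne i (tendsto_nhds_unique (hentry i) h0)
    · have hzi : ‖(d i)⁻¹‖ < 1 := by
        rw [norm_inv]
        exact inv_lt_one_of_one_lt₀ hgt
      have h0 := aux_zpow_tendsto_zero hzi hkT
      have h0' : Tendsto (fun m => (d i ^ k m)⁻¹) atTop (𝓝 0) := by
        refine h0.congr fun m => ?_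
        rw [inv_zpow]
      have h1 : Tendsto (fun m => (d i ^ k m)⁻¹) atTop (𝓝 (L' i i)⁻¹) :=
        (hentry i).inv₀ (hcne i)
      have : (L' i i)⁻¹ = 0 := tendsto_nhds_unique h1 h0'
      exact hcne i (inv_eq_zero.mp this)
  have hspec : spectrum ℂ (Ac : Matrix (Fin n) (Fin n) ℂ) = Set.range d := by
    rw [hPDP, spectrum.units_conjugate, spectrum_diagonal]
  constructor
  · rw [hspec]
    rintro μ ⟨i, rfl⟩
    exact habs i
  -- Part 2
  intro hclosed
  by_cases hinj : Function.Injective (fun j : ℤ => A ^ j)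
  · -- injective case: contradiction with Baire category
    exfalso
    -- the complexification as a homomorphism
    set φ : Matrix (Fin n) (Fin n) ℝ →* Matrix (Fin n) (Fin n) ℂ :=
      ((Complex.ofRealHom.mapMatrix :
        Matrix (Fin n) (Fin n) ℝ →+* Matrix (Fin n) (Fin n) ℂ) : Matrix (Fin n) (Fin n) ℝ →* Matrix (Fin n) (Fin n) ℂ) with hφdef
    have hAcmap : Ac = Units.map φ A := by
      apply Units.ext
      rw [hAc]
      simp only [Units.coe_map, hφdef, MonoidHom.coe_coe, RingHom.mapMatrix_apply]
      rfl
    set C : ℝ := ∑ p : Fin n × Fin n, ∑ l, ‖(Pu : Matrix (Fin n) (Fin n) ℂ) p.1 l‖ * ‖Q l p.2‖ with hCdef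
    have hCbound : ∀ (j : ℤ) (i i' : Fin n), ‖((Ac ^ j : (Matrix (Fin n) (Fin n) ℂ)ˣ) : Matrix (Fin n) (Fin n) ℂ) i i'‖ ≤ C := by
      intro j i i'
      rw [hpow j]
      have hentry_eq : ((Pu : Matrix (Fin n) (Fin n) ℂ) * Matrix.diagonal (fun l => d l ^ j) * Q) i i'
          = ∑ l, (Pu : Matrix (Fin n) (Fin n) ℂ) i l * d l ^ j * Q l i' := by
        rw [Matrix.mul_apply]
        congr 1
        funext l
        rw [Matrix.mul_diagonal]
      rw [hentry_eq]
      calc ‖∑ l, (Pu : Matrix (Fin n) (Fin n) ℂ) i l * d l ^ j * Q l i'‖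
          ≤ ∑ l, ‖(Pu : Matrix (Fin n) (Fin n) ℂ) i l * d l ^ j * Q l i'‖ := norm_sum_le _ _
        _ = ∑ l, ‖(Pu : Matrix (Fin n) (Fin n) ℂ) i l‖ * ‖Q l i'‖ := by
            refine Finset.sum_congr rfl fun l _ => ?_
            rw [norm_mul, norm_mul, norm_zpow, habs l,
              one_zpow, mul_one]
        _ ≤ C := by
            rw [hCdef]
            have h := Finset.single_le_sum
              (f := fun p : Fin n × Fin n => ∑ l, ‖(Pu : Matrix (Fin n) (Fin n) ℂ) p.1 l‖ * ‖Q l p.2‖)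
              (fun p _ => Finset.sum_nonneg fun l _ =>
                mul_nonneg (norm_nonneg _) (norm_nonneg _))
              (Finset.mem_univ (i, i'))
            simpa using h
    -- transfer the bound to the real powers
    have hAcj : ∀ j : ℤ, ((Ac ^ j : (Matrix (Fin n) (Fin n) ℂ)ˣ) : Matrix (Fin n) (Fin n) ℂ) =
        ((A ^ j : GL (Fin n) ℝ) : Matrix (Fin n) (Fin n) ℝ).map Complex.ofReal := by
      intro j
      rw [hAcmap, ← map_zpow]
      rfl
    have hbR : ∀ (j : ℤ) (i i' : Fin n),
        ((A ^ j : GL (Fin n) ℝ) : Matrix (Fin n) (Fin n) ℝ) i i' ∈ Set.Icc (-C) C := by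
      intro j i i'
      have h := hCbound j i i'
      rw [hAcj j] at h
      rw [Matrix.map_apply] at h
      rw [Complex.norm_real, Real.norm_eq_abs] at h
      exact abs_le.mp h
    -- compact box
    set K : Set (Matrix (Fin n) (Fin n) ℝ) :=
      {X | ∀ i i', X i i' ∈ Set.Icc (-C) C} with hKdef
    have hKc : IsCompact K := by
      have h := isCompact_univ_pi
        (fun _ : Fin n => isCompact_univ_pi
          (fun _ : Fin n => (isCompact_Icc (a := -C) (b := C))))
      have he : K = (Set.univ.pi fun _ : Fin n =>
          Set.univ.pi fun _ : Fin n => Set.Icc (-C) C) := by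
        ext X
        constructor
        · intro hX i _ j _
          exact hX i j
        · intro hX i j
          exact hX i (Set.mem_univ i) j (Set.mem_univ j)
      rw [he]; exact h
    set S : Set (Matrix (Fin n) (Fin n) ℝ) :=
      Set.range fun t : ℤ => ((A ^ t : GL (Fin n) ℝ) : Matrix (Fin n) (Fin n) ℝ) with hSdef
    have hSK : S ⊆ K := by
      rintro X ⟨t, rfl⟩ i i'
      exact hbR t i i'
    -- convergent subsequence of the natural powers
    set x : ℕ → Matrix (Fin n) (Fin n) ℝ :=
      fun j => ((A ^ (j : ℤ) : GL (Fin n) ℝ) : Matrix (Fin n) (Fin n) ℝ) with hxdef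
    have hxK : ∀ j, x j ∈ K := fun j i i' => hbR (j : ℤ) i i'
    haveI : FirstCountableTopology (Matrix (Fin n) (Fin n) ℝ) :=
      inferInstanceAs (FirstCountableTopology (Fin n → Fin n → ℝ))
    obtain ⟨a, _, ψ, hψ, hψlim⟩ := hKc.tendsto_subseq hxK
    have haS : a ∈ S := by
      refine hclosed.mem_of_tendsto hψlim ?_
      exact Eventually.of_forall fun j => ⟨((ψ j : ℕ) : ℤ), rfl⟩
    obtain ⟨t0, ht0⟩ := haS
    -- the limit is invertible
    have hadet : a.det ≠ 0 := by
      rw [← ht0]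
      exact IsUnit.ne_zero ((Matrix.isUnit_iff_isUnit_det _).mp (A ^ t0).isUnit)
    -- limit of inverses
    have hinvlim : Tendsto (fun j => (x (ψ j))⁻¹) atTop (𝓝 a⁻¹) := by
      have hdetc : Continuous fun X : Matrix (Fin n) (Fin n) ℝ => X.det :=
        Continuous.matrix_det continuous_id
      have hadjc : Continuous fun X : Matrix (Fin n) (Fin n) ℝ => X.adjugate :=
        Continuous.matrix_adjugate continuous_id
      have hdetlim : Tendsto (fun j => (x (ψ j)).det) atTop (𝓝 a.det) :=
        (hdetc.tendsto a).comp hψlim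
      have hadjlim : Tendsto (fun j => (x (ψ j)).adjugate) atTop (𝓝 a.adjugate) :=
        (hadjc.tendsto a).comp hψlim
      have h := (hdetlim.inv₀ hadet).smul hadjlim
      have heq : ∀ X : Matrix (Fin n) (Fin n) ℝ, X⁻¹ = X.det⁻¹ • X.adjugate := by
        intro X
        rw [Matrix.inv_def, Ring.inverse_eq_inv]
      rw [← heq a] at h
      refine h.congr fun j => ?_
      rw [heq (x (ψ j))]
    have hψ1lim : Tendsto (fun j => x (ψ (j + 1))) atTop (𝓝 a) := by
      have := hψlim.comp (tendsto_add_atTop_nat 1)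
      exact this
    have hmul : Tendsto (fun j => x (ψ (j + 1)) * (x (ψ j))⁻¹) atTop (𝓝 (a * a⁻¹)) :=
      hψ1lim.mul hinvlim
    have haa : a * a⁻¹ = 1 := by
      rw [← ht0, ← Matrix.coe_units_inv, ← Units.val_mul, mul_inv_cancel, Units.val_one]
    rw [haa] at hmul
    set e : ℕ → ℤ := fun j => ((ψ (j + 1) : ℕ) : ℤ) - ((ψ j : ℕ) : ℤ) with hedef
    have hepos : ∀ j, 0 < e j := by
      intro j
      have h2 := hψ (Nat.lt_succ_self j)
      simp only [Nat.succ_eq_add_one] at h2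
      simp only [hedef]
      omega
    have hexp : ∀ j, x (ψ (j + 1)) * (x (ψ j))⁻¹ =
        ((A ^ e j : GL (Fin n) ℝ) : Matrix (Fin n) (Fin n) ℝ) := by
      intro j
      rw [hedef, zpow_sub, Units.val_mul, ← Matrix.coe_units_inv]
    -- Baire category: the countable closed set S has an isolated point
    have hScomp : IsCompact S := IsCompact.of_isClosed_subset hKc hclosed hSK
    haveI : CompactSpace ↥S := isCompact_iff_compactSpace.mp hScomp
    haveI : Nonempty ↥S := ⟨⟨_, ⟨0, rfl⟩⟩⟩
    have hcover : (⋃ t : ℤ, ({⟨((A ^ t : GL (Fin n) ℝ) : Matrix (Fin n) (Fin n) ℝ),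
        ⟨t, rfl⟩⟩} : Set ↥S)) = Set.univ := by
      ext s
      simp only [Set.mem_iUnion, Set.mem_singleton_iff, Set.mem_univ, iff_true]
      obtain ⟨v, t, rfl⟩ := s
      exact ⟨t, rfl⟩
    obtain ⟨t1, ht1⟩ := nonempty_interior_of_iUnion_of_closed
      (fun t : ℤ => isClosed_singleton) hcover
    set pt1 : ↥S := ⟨((A ^ t1 : GL (Fin n) ℝ) : Matrix (Fin n) (Fin n) ℝ), ⟨t1, rfl⟩⟩
      with hpt1def
    have hopen : IsOpen ({pt1} : Set ↥S) := by
      have heq : interior ({pt1} : Set ↥S) = {pt1} := by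
        refine Set.Subset.antisymm interior_subset ?_
        obtain ⟨y, hy⟩ := ht1
        have hy1 : y = pt1 := Set.mem_singleton_iff.mp (interior_subset hy)
        subst hy1
        exact Set.singleton_subset_iff.mpr hy
      rw [← heq]
      exact isOpen_interior
    obtain ⟨U, hU, hUeq⟩ := isOpen_induced_iff.mp hopen
    have hpt1U : ((pt1 : ↥S) : Matrix (Fin n) (Fin n) ℝ) ∈ U := by
      have : pt1 ∈ Subtype.val ⁻¹' U := by rw [hUeq]; rfl
      exact this
    -- the sequence A^(t1 + e j) converges to A^t1
    have hseq : Tendsto (fun j =>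
        ((A ^ (t1 + e j) : GL (Fin n) ℝ) : Matrix (Fin n) (Fin n) ℝ)) atTop
        (𝓝 ((A ^ t1 : GL (Fin n) ℝ) : Matrix (Fin n) (Fin n) ℝ)) := by
      have h1 : Tendsto (fun j =>
          ((A ^ t1 : GL (Fin n) ℝ) : Matrix (Fin n) (Fin n) ℝ) *
            (x (ψ (j + 1)) * (x (ψ j))⁻¹)) atTop
          (𝓝 (((A ^ t1 : GL (Fin n) ℝ) : Matrix (Fin n) (Fin n) ℝ) * 1)) :=
        tendsto_const_nhds.mul hmul
      rw [mul_one] at h1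
      refine h1.congr fun j => ?_
      rw [hexp j, ← Units.val_mul, ← zpow_add]
    have hev : ∀ᶠ j in atTop,
        ((A ^ (t1 + e j) : GL (Fin n) ℝ) : Matrix (Fin n) (Fin n) ℝ) ∈ U :=
      hseq.eventually (hU.mem_nhds hpt1U)
    obtain ⟨j, hj⟩ := hev.exists
    have hmem : (⟨((A ^ (t1 + e j) : GL (Fin n) ℝ) : Matrix (Fin n) (Fin n) ℝ),
        ⟨t1 + e j, rfl⟩⟩ : ↥S) ∈ Subtype.val ⁻¹' U := hj
    rw [hUeq] at hmem
    rw [Set.mem_singleton_iff] at hmem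
    have hvals : ((A ^ (t1 + e j) : GL (Fin n) ℝ) : Matrix (Fin n) (Fin n) ℝ) =
        ((A ^ t1 : GL (Fin n) ℝ) : Matrix (Fin n) (Fin n) ℝ) :=
      congrArg Subtype.val hmem
    have hunits : A ^ (t1 + e j) = A ^ t1 := Units.ext hvals
    have := hinj hunits
    have hej := hepos j
    omega
  · -- non-injective case: A has finite order
    rw [Function.not_injective_iff] at hinj
    obtain ⟨p, q, hpq, hne⟩ := hinj
    have hzero : A ^ (p - q) = 1 := by
      rw [zpow_sub, hpq, mul_inv_cancel]
    set m : ℕ := (p - q).natAbs with hmdef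
    have hm : 0 < m := Int.natAbs_pos.mpr (sub_ne_zero.mpr hne)
    have hAm : A ^ (m : ℤ) = 1 := by
      rcases Int.natAbs_eq (p - q) with h | h
      · rw [← h]; exact hzero
      · rw [show (m : ℤ) = -(p - q) by omega, zpow_neg, hzero, inv_one]
    have hAmnat : A ^ m = 1 := by
      rw [← zpow_natCast]; exact hAm
    constructor
    · -- eigenvalues are m-th roots of unity
      set φ : Matrix (Fin n) (Fin n) ℝ →* Matrix (Fin n) (Fin n) ℂ :=
        ((Complex.ofRealHom.mapMatrix :
          Matrix (Fin n) (Fin n) ℝ →+* Matrix (Fin n) (Fin n) ℂ) : Matrix (Fin n) (Fin n) ℝ →* Matrix (Fin n) (Fin n) ℂ) with hφdef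
      have hAcmap : Ac = Units.map φ A := by
        apply Units.ext
        rw [hAc]
        simp only [Units.coe_map, hφdef, MonoidHom.coe_coe, RingHom.mapMatrix_apply]
        rfl
      have hAcm : Ac ^ m = 1 := by
        rw [hAcmap, ← map_pow, hAmnat, map_one]
      have hDum : Du ^ m = 1 := by
        have h1 : (MulAut.conj Pu) (Du ^ m) = 1 := by
          rw [map_pow]
          have : (MulAut.conj Pu) Du = Ac := by
            rw [MulAut.conj_apply, hAcu]
          rw [this, hAcm]
        have h2 : (MulAut.conj Pu) (Du ^ m) = (MulAut.conj Pu) 1 := by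
          rw [h1, map_one]
        exact (MulAut.conj Pu).injective h2
      have hdm : ∀ i, d i ^ m = 1 := by
        intro i
        have hcoe : ((Du ^ m : (Matrix (Fin n) (Fin n) ℂ)ˣ) : Matrix (Fin n) (Fin n) ℂ) = 1 := by
          rw [hDum, Units.val_one]
        rw [Units.val_pow_eq_pow_val] at hcoe
        have hcoe2 : (Matrix.diagonal d) ^ m = 1 := hcoe
        rw [Matrix.diagonal_pow] at hcoe2
        have h := congrFun (congrFun hcoe2 i) i
        rwa [Matrix.diagonal_apply_eq, Matrix.one_apply_eq] at h
      rw [hspec]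
      rintro μ ⟨i, rfl⟩
      exact ⟨m, hm, hdm i⟩
    · -- finiteness of the range
      have key : ∀ j : ℤ, A ^ j = A ^ (j % (m : ℤ)) := by
        intro j
        conv_lhs => rw [← Int.emod_add_mul_ediv j (m : ℤ)]
        rw [zpow_add, zpow_mul, hAm, one_zpow, mul_one]
      have hsub : (Set.range fun t : ℤ => A ^ t) ⊆
          (fun t : ℤ => A ^ t) '' (Set.Icc 0 ((m : ℤ) - 1)) := by
        rintro X ⟨j, rfl⟩
        refine ⟨j % (m : ℤ), ?_, (key j).symm⟩
        have h1 : 0 ≤ j % (m : ℤ) := Int.emod_nonneg j (by exact_mod_cast hm.ne')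
        have h2 : j % (m : ℤ) < (m : ℤ) := Int.emod_lt_of_pos j (by exact_mod_cast hm)
        exact ⟨h1, by omega⟩
      exact ((Set.finite_Icc _ _).image _).subset hsub
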